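/- The Robinson-score bias under misspecified nuisances is a product of nuisance errors: for constant θ₀, E[((Y - ℓ(V)) - θ₀(D - m(V)))·(D - m(V))] = E[(ℓ₀(V) - ℓ(V) - θ₀(m₀(V) - m(V)))·(m₀(V) - m(V))], where ℓ₀(V) = E[Y | V] and m₀(V) = E[D | V]. -/

import Mathlib

open MeasureTheory

/-- The Robinson-score bias under misspecified nuisances is a product
of nuisance errors: for constant `θ₀`,
`E[((Y - ℓ(V)) - θ₀(D - m(V)))·(D - m(V))]
  = E[(ℓ₀(V) - ℓ(V) - θ₀(m₀(V) - m(V)))·(m₀(V) - m(V))]`,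
where `ℓ₀ = E[Y|V]` and `m₀ = E[D|V]`. -/
theorem robinson_score_bias_product
    {Ω : Type*} {mΩ : MeasurableSpace Ω} (μ : Measure Ω) [IsProbabilityMeasure μ]
    (𝒱 : MeasurableSpace Ω) (h𝒱 : 𝒱 ≤ mΩ)
    (Y D eps l0 m0 l m : Ω → ℝ) (θ₀ : ℝ)
    (hY2 : MemLp Y 2 μ) (hD2 : MemLp D 2 μ)
    (hl0meas : Measurable[𝒱] l0) (hm0meas : Measurable[𝒱] m0)
    (hl0 : μ[Y | 𝒱] =ᵐ[μ] l0) (hm0 : μ[D | 𝒱] =ᵐ[μ] m0)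
    (hlmeas : Measurable[𝒱] l) (hmmeas : Measurable[𝒱] m)
    (C : ℝ) (hlbdd : ∀ ω, |l ω| ≤ C) (hmbdd : ∀ ω, |m ω| ≤ C)
    (hl0bdd : ∀ ω, |l0 ω| ≤ C) (hm0bdd : ∀ ω, |m0 ω| ≤ C)
    (hepsdef : ∀ ω, eps ω = Y ω - θ₀ * D ω - (l0 ω - θ₀ * m0 ω))
    (heps : μ[eps | 𝒱] =ᵐ[μ] 0)
    (hepsxi : ∫ ω, eps ω * (D ω - m0 ω) ∂μ = 0)
    (hxi : μ[fun ω => D ω - m0 ω | 𝒱] =ᵐ[μ] 0) :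
    ∫ ω, ((Y ω - l ω) - θ₀ * (D ω - m ω)) * (D ω - m ω) ∂μ =
      ∫ ω, (l0 ω - l ω - θ₀ * (m0 ω - m ω)) * (m0 ω - m ω) ∂μ := by
  classical
  set ξ : Ω → ℝ := fun ω => D ω - m0 ω with hξdef
  set g : Ω → ℝ := fun ω => m0 ω - m ω with hgdef
  set h : Ω → ℝ := fun ω => l0 ω - l ω - θ₀ * (m0 ω - m ω) with hhdef
  have hepseq : eps = fun ω => Y ω - θ₀ * D ω - (l0 ω - θ₀ * m0 ω) := funext hepsdef
  -- measurability wrt the ambient σ-algebra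
  have hl0m : Measurable[mΩ] l0 := fun s hs => h𝒱 _ (hl0meas hs)
  have hm0m : Measurable[mΩ] m0 := fun s hs => h𝒱 _ (hm0meas hs)
  have hlm : Measurable[mΩ] l := fun s hs => h𝒱 _ (hlmeas hs)
  have hmm : Measurable[mΩ] m := fun s hs => h𝒱 _ (hmmeas hs)
  -- L² facts
  have hl0_2 : MemLp l0 2 μ :=
    MemLp.of_bound hl0m.aestronglyMeasurable C
      (Filter.Eventually.of_forall fun ω => by simpa [Real.norm_eq_abs] using hl0bdd ω)
  have hm0_2 : MemLp m0 2 μ :=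
    MemLp.of_bound hm0m.aestronglyMeasurable C
      (Filter.Eventually.of_forall fun ω => by simpa [Real.norm_eq_abs] using hm0bdd ω)
  have heps2 : MemLp eps 2 μ := by
    rw [hepseq]
    exact (hY2.sub (hD2.const_mul θ₀)).sub (hl0_2.sub (hm0_2.const_mul θ₀))
  have hξ2 : MemLp ξ 2 μ := hD2.sub hm0_2
  have hepsInt : Integrable eps μ := heps2.integrable one_le_two
  have hξInt : Integrable ξ μ := hξ2.integrable one_le_two
  -- g and h are bounded, 𝒱-strongly-measurable
  have hgb : ∀ ω, ‖g ω‖ ≤ 2 * C := fun ω => by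
    simp only [Real.norm_eq_abs, hgdef]
    calc |m0 ω - m ω| ≤ |m0 ω| + |m ω| := abs_sub (m0 ω) (m ω)
    _ ≤ C + C := add_le_add (hm0bdd ω) (hmbdd ω)
    _ = 2 * C := by ring
  have hhb : ∀ ω, ‖h ω‖ ≤ 2 * C + |θ₀| * (2 * C) := fun ω => by
    simp only [Real.norm_eq_abs, hhdef]
    calc |l0 ω - l ω - θ₀ * (m0 ω - m ω)|
        ≤ |l0 ω - l ω| + |θ₀ * (m0 ω - m ω)| := abs_sub _ _
    _ ≤ (|l0 ω| + |l ω|) + |θ₀| * |m0 ω - m ω| := by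
        rw [abs_mul]; exact add_le_add (abs_sub _ _) le_rfl
    _ ≤ (C + C) + |θ₀| * (2 * C) := by
        refine add_le_add (add_le_add (hl0bdd ω) (hlbdd ω)) ?_
        refine mul_le_mul_of_nonneg_left ?_ (abs_nonneg θ₀)
        simpa [Real.norm_eq_abs] using hgb ω
    _ = 2 * C + |θ₀| * (2 * C) := by ring
  have hgmeasV : StronglyMeasurable[𝒱] g := (hm0meas.sub hmmeas).stronglyMeasurable
  have hhmeasV : StronglyMeasurable[𝒱] h :=
    ((hl0meas.sub hlmeas).sub ((hm0meas.sub hmmeas).const_mul θ₀)).stronglyMeasurable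
  have hgmeas : Measurable[mΩ] g := hm0m.sub hmm
  have hhmeas : Measurable[mΩ] h := (hl0m.sub hlm).sub ((hm0m.sub hmm).const_mul θ₀)
  -- integrability of the four pieces
  have I1 : Integrable (fun ω => eps ω * ξ ω) μ := by
    have : MemLp (eps • ξ) 1 μ :=
      hξ2.smul heps2
    exact memLp_one_iff_integrable.mp this
  have I2 : Integrable (fun ω => g ω * eps ω) μ :=
    hepsInt.bdd_mul hgmeas.aestronglyMeasurable (Filter.Eventually.of_forall hgb)
  have I3 : Integrable (fun ω => h ω * ξ ω) μ :=
    hξInt.bdd_mul hhmeas.aestronglyMeasurable (Filter.Eventually.of_forall hhb)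
  have hgInt : Integrable g μ :=
    memLp_one_iff_integrable.mp
      (MemLp.of_bound hgmeas.aestronglyMeasurable (2 * C)
        (Filter.Eventually.of_forall hgb))
  have I4 : Integrable (fun ω => h ω * g ω) μ :=
    hgInt.bdd_mul hhmeas.aestronglyMeasurable (Filter.Eventually.of_forall hhb)
  haveI : SigmaFinite (μ.trim h𝒱) := by infer_instance
  -- second cross term vanishes
  have T2 : ∫ ω, g ω * eps ω ∂μ = 0 := by
    have hcond : μ[g * eps|𝒱] =ᵐ[μ] g * μ[eps|𝒱] :=
      condExp_mul_of_stronglyMeasurable_left hgmeasV I2 hepsInt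
    have hzero : μ[g * eps|𝒱] =ᵐ[μ] 0 := by
      refine hcond.trans ?_
      filter_upwards [heps] with ω hω
      simp [hω]
    calc ∫ ω, g ω * eps ω ∂μ = ∫ ω, (μ[g * eps|𝒱]) ω ∂μ := (integral_condExp h𝒱).symm
    _ = ∫ ω, (0 : Ω → ℝ) ω ∂μ := integral_congr_ae hzero
    _ = 0 := by simp
  -- third cross term vanishes
  have T3 : ∫ ω, h ω * ξ ω ∂μ = 0 := by
    have hcond : μ[h * ξ|𝒱] =ᵐ[μ] h * μ[ξ|𝒱] :=
      condExp_mul_of_stronglyMeasurable_left hhmeasV I3 hξInt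
    have hzero : μ[h * ξ|𝒱] =ᵐ[μ] 0 := by
      refine hcond.trans ?_
      filter_upwards [hxi] with ω hω
      simp only [Pi.mul_apply, Pi.zero_apply]
      rw [show μ[ξ|𝒱] = μ[fun ω => D ω - m0 ω|𝒱] from rfl]
      exact mul_eq_zero_of_right _ hω
    calc ∫ ω, h ω * ξ ω ∂μ = ∫ ω, (μ[h * ξ|𝒱]) ω ∂μ := (integral_condExp h𝒱).symm
    _ = ∫ ω, (0 : Ω → ℝ) ω ∂μ := integral_congr_ae hzero
    _ = 0 := by simp
  -- pointwise decomposition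
  have hdecomp : ∀ ω, ((Y ω - l ω) - θ₀ * (D ω - m ω)) * (D ω - m ω)
      = eps ω * ξ ω + g ω * eps ω + h ω * ξ ω + h ω * g ω := fun ω => by
    simp only [hξdef, hgdef, hhdef, hepsdef ω]
    ring
  calc ∫ ω, ((Y ω - l ω) - θ₀ * (D ω - m ω)) * (D ω - m ω) ∂μ
      = ∫ ω, (eps ω * ξ ω + g ω * eps ω + h ω * ξ ω + h ω * g ω) ∂μ :=
        integral_congr_ae (Filter.Eventually.of_forall hdecomp)
    _ = ∫ ω, eps ω * ξ ω ∂μ + ∫ ω, g ω * eps ω ∂μ + ∫ ω, h ω * ξ ω ∂μ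
          + ∫ ω, h ω * g ω ∂μ := by
        have e1 : ∫ ω, (eps ω * ξ ω + g ω * eps ω) ∂μ
            = ∫ ω, eps ω * ξ ω ∂μ + ∫ ω, g ω * eps ω ∂μ := integral_add I1 I2
        have e2 : ∫ ω, ((eps ω * ξ ω + g ω * eps ω) + h ω * ξ ω) ∂μ
            = ∫ ω, (eps ω * ξ ω + g ω * eps ω) ∂μ + ∫ ω, h ω * ξ ω ∂μ :=
          integral_add (I1.add I2) I3
        have e3 : ∫ ω, (((eps ω * ξ ω + g ω * eps ω) + h ω * ξ ω) + h ω * g ω) ∂μ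
            = ∫ ω, ((eps ω * ξ ω + g ω * eps ω) + h ω * ξ ω) ∂μ + ∫ ω, h ω * g ω ∂μ :=
          integral_add ((I1.add I2).add I3) I4
        rw [e3, e2, e1]
    _ = ∫ ω, h ω * g ω ∂μ := by
        rw [show ∫ ω, eps ω * ξ ω ∂μ = 0 from hepsxi, T2, T3]; ring
    _ = ∫ ω, (l0 ω - l ω - θ₀ * (m0 ω - m ω)) * (m0 ω - m ω) ∂μ := rfl
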